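/- Let the increments be almost surely nonnegative, i.e., P{X ≥ 0} = 1, let β := P{X = 0} ∈ [0,1), and let a > 0. Then E[e^{a τ(x)}] < ∞ for some x ≥ 0 if and only if E[e^{a τ(x)}] < ∞ for every x ≥ 0, and this holds if and only if a < -log β (where -log β := ∞ when β = 0). -/

import Mathlib

open MeasureTheory ProbabilityTheory Filter Set
open scoped ENNReal Topology

noncomputable section

/-- Partial sums of the increment sequence: the zero-delayed random walk
`S_0 = 0`, `S_n = X_0 + ⋯ + X_{n-1}`. -/
def rwS {Ω : Type*} (X : ℕ → Ω → ℝ) (n : ℕ) (ω : Ω) : ℝ := ∑ i ∈ Finset.range n, X i ω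

/-- First passage time `τ(x) = inf {n ∈ ℕ₀ : S_n > x}` into `(x, ∞)`,
with value `⊤` if the walk never exceeds `x`. -/
def firstPassage {Ω : Type*} (X : ℕ → Ω → ℝ) (x : ℝ) (ω : Ω) : ℕ∞ :=
  ⨅ (n : ℕ) (_ : x < rwS X n ω), (n : ℕ∞)

/-- Number of visits `N(x) = #{n ∈ ℕ : S_n ≤ x}` of the walk (after time 0) to `(-∞, x]`. -/
def numVisits {Ω : Type*} (X : ℕ → Ω → ℝ) (x : ℝ) (ω : Ω) : ℕ∞ :=
  {n : ℕ | 1 ≤ n ∧ rwS X n ω ≤ x}.encard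

/-- Last exit time `ρ(x)` from `(-∞, x]`: it is `sup {n ∈ ℕ : S_n ≤ x}` if
`inf_{n ≥ 1} S_n ≤ x` (the infimum taken in the extended reals), and `0` otherwise. -/
def lastExit {Ω : Type*} (X : ℕ → Ω → ℝ) (x : ℝ) (ω : Ω) : ℕ∞ :=
  if (⨅ (n : ℕ) (_ : 1 ≤ n), (rwS X n ω : EReal)) ≤ (x : EReal) then
    ⨆ (n : ℕ) (_ : 1 ≤ n ∧ rwS X n ω ≤ x), (n : ℕ∞)
  else 0

/-- `e^{a n}` for `n : ℕ∞`, equal to `∞` when `n = ∞`. -/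
def eexp (a : ℝ) (n : ℕ∞) : ℝ≥0∞ :=
  if n = ⊤ then ⊤ else ENNReal.ofReal (Real.exp (a * n.toNat))

/-- Exponential moment `E[e^{a T}]` (with values in `[0,∞]`) of an `ℕ∞`-valued random time. -/
def expMoment {Ω : Type*} [MeasurableSpace Ω] (P : Measure Ω) (a : ℝ) (T : Ω → ℕ∞) : ℝ≥0∞ :=
  ∫⁻ ω, eexp a (T ω) ∂P

/-- Laplace transform `φ(t) = E e^{-tY}` with values in `[0,∞]`. -/
def laplace {Ω : Type*} [MeasurableSpace Ω] (P : Measure Ω) (Y : Ω → ℝ) (t : ℝ) : ℝ≥0∞ :=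
  ∫⁻ ω, ENNReal.ofReal (Real.exp (-t * Y ω)) ∂P

/-- `R := -log inf_{t ≥ 0} E e^{-tY}`. -/
def Rconst {Ω : Type*} [MeasurableSpace Ω] (P : Measure Ω) (Y : Ω → ℝ) : ℝ :=
  -Real.log (⨅ t ∈ Set.Ici (0:ℝ), laplace P Y t).toReal

/-- The law of `Y` under `P` is concentrated on the lattice `l·ℤ`. -/
def ConcOnLattice {Ω : Type*} [MeasurableSpace Ω] (P : Measure Ω) (Y : Ω → ℝ) (l : ℝ) : Prop :=
  P {ω | ∃ k : ℤ, Y ω = l * k} = 1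

/-- The law of `Y` under `P` is non-lattice: it is not concentrated on any lattice `l·ℤ`, `l > 0`. -/
def NonLattice {Ω : Type*} [MeasurableSpace Ω] (P : Measure Ω) (Y : Ω → ℝ) : Prop :=
  ¬ ∃ l > (0:ℝ), ConcOnLattice P Y l

/-- The law of `Y` under `P` is lattice with span `l`: it is concentrated on `l·ℤ` and `l` is
maximal with this property. -/
def LatticeSpan {Ω : Type*} [MeasurableSpace Ω] (P : Measure Ω) (Y : Ω → ℝ) (l : ℝ) : Prop :=
  0 < l ∧ ConcOnLattice P Y l ∧ ∀ l' > (0:ℝ), ConcOnLattice P Y l' → l' ≤ l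

/-- The mean `E_γ[S_τ] = E[S_τ e^{aτ} e^{-γ S_τ}]` of `S_τ` under the exponentially tilted
measure, computed in `[0,∞]` (here `τ = τ(0)`; on `{τ = ∞}` the integrand is read as `0`). -/
def tiltedMeanStau {Ω : Type*} [MeasurableSpace Ω] (P : Measure Ω) (X : ℕ → Ω → ℝ)
    (a γ : ℝ) : ℝ≥0∞ :=
  ∫⁻ ω, ENNReal.ofReal (rwS X (firstPassage X 0 ω).toNat ω *
    Real.exp (a * ((firstPassage X 0 ω).toNat : ℝ)) *
    Real.exp (-γ * rwS X (firstPassage X 0 ω).toNat ω)) ∂P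

lemma lt_firstPassage_iff {Ω : Type*} (X : ℕ → Ω → ℝ) (x : ℝ) (ω : Ω) (n : ℕ) :
    (n : ℕ∞) < firstPassage X x ω ↔ ∀ k ≤ n, rwS X k ω ≤ x := by
  rw [← ENat.add_one_le_iff (by simp : (n:ℕ∞) ≠ ⊤)]
  unfold firstPassage
  rw [le_iInf_iff]
  constructor
  · intro h k hk
    by_contra hc
    push_neg at hc
    have := h k
    rw [le_iInf_iff] at this
    have := this hc
    have h2 : (k:ℕ∞) ≤ n := by exact_mod_cast hk
    have h3 : (n:ℕ∞) + 1 ≤ (n:ℕ∞) := le_trans this h2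
    exact lt_irrefl _ ((ENat.add_one_le_iff (by simp)).mp h3)
  · intro h k
    rw [le_iInf_iff]
    intro hk
    have : ¬ k ≤ n := fun hkn => absurd (h k hkn) (not_le.mpr hk)
    push_neg at this
    exact_mod_cast Nat.succ_le_of_lt this

lemma eexp_eq (a : ℝ) (ha : 0 < a) (m : ℕ∞) :
    eexp a m = 1 + ∑' n : ℕ, (if (n : ℕ∞) < m then
      ENNReal.ofReal (Real.exp (a * (n+1)) - Real.exp (a * n)) else 0) := by
  cases m with
  | top =>
    have hE : eexp a ⊤ = ⊤ := by simp [eexp]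
    rw [hE]
    have hterm : ∀ n : ℕ, ENNReal.ofReal (Real.exp a - 1) ≤
        (if (n : ℕ∞) < (⊤:ℕ∞) then
          ENNReal.ofReal (Real.exp (a * (n+1)) - Real.exp (a * n)) else 0) := by
      intro n
      rw [if_pos (by exact_mod_cast lt_top_iff_ne_top.mpr (by simp))]
      apply ENNReal.ofReal_le_ofReal
      have h1 : Real.exp (a * (n+1)) - Real.exp (a * n) = Real.exp (a*n) * (Real.exp a - 1) := by
        rw [mul_sub, ← Real.exp_add]; ring_nf
      rw [h1]
      nlinarith [Real.one_le_exp (by positivity : (0:ℝ) ≤ a * n), Real.one_le_exp ha.le,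
        Real.exp_pos a]
    have : (⊤:ℝ≥0∞) ≤ ∑' n : ℕ, (if (n : ℕ∞) < (⊤:ℕ∞) then
        ENNReal.ofReal (Real.exp (a * (n+1)) - Real.exp (a * n)) else 0) := by
      calc (⊤:ℝ≥0∞) = ∑' _ : ℕ, ENNReal.ofReal (Real.exp a - 1) := by
            rw [ENNReal.tsum_const_eq_top_of_ne_zero]
            simp only [ne_eq, ENNReal.ofReal_eq_zero, not_le]
            have := Real.exp_lt_exp.mpr ha
            rw [Real.exp_zero] at this
            linarith
        _ ≤ _ := ENNReal.tsum_le_tsum hterm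
    rw [eq_comm, ← top_le_iff]
    exact le_trans this le_add_self
  | coe k =>
    have hcast : ∀ n : ℕ, ((n : ℕ∞) < (k : ℕ∞)) ↔ n < k := by
      intro n; exact_mod_cast Iff.rfl
    have hsum : ∑' n : ℕ, (if (n : ℕ∞) < (k:ℕ∞) then
        ENNReal.ofReal (Real.exp (a * (n+1)) - Real.exp (a * n)) else 0)
        = ∑ n ∈ Finset.range k, ENNReal.ofReal (Real.exp (a * (n+1)) - Real.exp (a * n)) := by
      rw [tsum_eq_sum (s := Finset.range k)]
      · apply Finset.sum_congr rfl
        intro n hn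
        rw [if_pos ((hcast n).mpr (Finset.mem_range.mp hn))]
      · intro n hn
        rw [if_neg]
        rw [hcast n]
        exact fun h => hn (Finset.mem_range.mpr h)
    rw [hsum]
    have hnn : ∀ n ∈ Finset.range k, (0:ℝ) ≤ Real.exp (a * (n+1)) - Real.exp (a * n) := by
      intro n _
      have : a * n ≤ a * (n+1) := by nlinarith
      linarith [Real.exp_le_exp.mpr this]
    rw [← ENNReal.ofReal_sum_of_nonneg hnn]
    have htel : ∑ n ∈ Finset.range k, (Real.exp (a * (n+1)) - Real.exp (a * n))
        = Real.exp (a * k) - 1 := by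
      have := Finset.sum_range_sub (f := fun n : ℕ => Real.exp (a * n)) k
      simp only [Nat.cast_zero, mul_zero, Real.exp_zero] at this
      rw [← this]
      apply Finset.sum_congr rfl
      intro n _
      push_cast
      ring_nf
    rw [htel]
    have : eexp a (k : ℕ∞) = ENNReal.ofReal (Real.exp (a * k)) := by
      simp [eexp]
    rw [this, ← ENNReal.ofReal_one, ← ENNReal.ofReal_add (by norm_num)
      (by linarith [Real.one_le_exp (by positivity : (0:ℝ) ≤ a * k)])]
    ring_nf

lemma rwS_measurable {Ω : Type*} [MeasurableSpace Ω] (X : ℕ → Ω → ℝ)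
    (hmeas : ∀ i, Measurable (X i)) (n : ℕ) : Measurable (rwS X n) :=
  Finset.measurable_sum _ (fun i _ => hmeas i)

lemma fp_set_eq {Ω : Type*} (X : ℕ → Ω → ℝ) (x : ℝ) (n : ℕ) :
    {ω | (n : ℕ∞) < firstPassage X x ω} = ⋂ k ∈ Finset.range (n+1), {ω | rwS X k ω ≤ x} := by
  ext ω
  simp only [Set.mem_setOf_eq, Set.mem_iInter, Finset.mem_range, lt_firstPassage_iff,
    Nat.lt_succ_iff]

lemma fp_set_measurable {Ω : Type*} [MeasurableSpace Ω] (X : ℕ → Ω → ℝ)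
    (hmeas : ∀ i, Measurable (X i)) (x : ℝ) (n : ℕ) :
    MeasurableSet {ω | (n : ℕ∞) < firstPassage X x ω} := by
  rw [fp_set_eq]
  exact MeasurableSet.biInter (Finset.range (n+1)).countable_toSet
    (fun k _ => measurableSet_le (rwS_measurable X hmeas k) measurable_const)

lemma expMoment_eq {Ω : Type*} [MeasurableSpace Ω] (P : Measure Ω) [IsProbabilityMeasure P]
    (a : ℝ) (ha : 0 < a) (T : Ω → ℕ∞)
    (hT : ∀ n : ℕ, MeasurableSet {ω | (n : ℕ∞) < T ω}) :
    expMoment P a T = 1 + ∑' n : ℕ,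
      ENNReal.ofReal (Real.exp (a * (n+1)) - Real.exp (a * n)) * P {ω | (n : ℕ∞) < T ω} := by
  unfold expMoment
  have h1 : ∀ ω, eexp a (T ω) = 1 + ∑' n : ℕ, ({ω | (n:ℕ∞) < T ω}).indicator
      (fun _ => ENNReal.ofReal (Real.exp (a * (n+1)) - Real.exp (a * n))) ω := by
    intro ω
    rw [eexp_eq a ha]
    congr 1
    apply tsum_congr
    intro n
    rw [Set.indicator_apply]
    rfl
  simp_rw [h1]
  rw [lintegral_add_left measurable_const, lintegral_one, lintegral_tsum]
  · congr 1
    · simp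
    · apply tsum_congr
      intro n
      rw [lintegral_indicator_const (hT n)]
  · intro n
    exact ((measurable_const.indicator (hT n)) : Measurable _).aemeasurable

lemma lower_bound {Ω : Type*} [MeasurableSpace Ω] (P : Measure Ω)
    (X : ℕ → Ω → ℝ) (hmeas : ∀ i, Measurable (X i))
    (hindep : iIndepFun X P)
    (hident : ∀ i, P.map (X i) = P.map (X 0))
    (x : ℝ) (hx : 0 ≤ x) (n : ℕ) :
    (P {ω | X 0 ω = 0}) ^ n ≤ P {ω | (n : ℕ∞) < firstPassage X x ω} := by
  have hsub : (⋂ i ∈ Finset.range n, X i ⁻¹' {0}) ⊆ {ω | (n : ℕ∞) < firstPassage X x ω} := by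
    intro ω hω
    simp only [Set.mem_iInter, Finset.mem_range, Set.mem_preimage, Set.mem_singleton_iff] at hω
    rw [Set.mem_setOf_eq, lt_firstPassage_iff]
    intro k hk
    have : rwS X k ω = 0 := by
      apply Finset.sum_eq_zero
      intro i hi
      exact hω i (lt_of_lt_of_le (Finset.mem_range.mp hi) hk)
    rw [this]; exact hx
  refine le_trans (le_of_eq ?_) (measure_mono hsub)
  have hprod := hindep.meas_biInter (S := Finset.range n) (s := fun i => X i ⁻¹' {0})
    (fun i _ => ⟨{0}, measurableSet_singleton 0, rfl⟩)
  rw [hprod]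
  have heach : ∀ i, P (X i ⁻¹' {0}) = P {ω | X 0 ω = 0} := by
    intro i
    have h1 : P (X i ⁻¹' {0}) = P.map (X i) {0} :=
      (Measure.map_apply (hmeas i) (measurableSet_singleton 0)).symm
    have h2 : P (X 0 ⁻¹' {0}) = P.map (X 0) {0} :=
      (Measure.map_apply (hmeas 0) (measurableSet_singleton 0)).symm
    have h3 : P (X i ⁻¹' {0}) = P (X 0 ⁻¹' {0}) := by rw [h1, h2, hident i]
    rw [h3]; rfl
  rw [Finset.prod_congr rfl (fun i _ => heach i), Finset.prod_const, Finset.card_range]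

-- product formula

lemma laplace_Sn {Ω : Type*} [MeasurableSpace Ω] (P : Measure Ω) [IsProbabilityMeasure P]
    (X : ℕ → Ω → ℝ) (hmeas : ∀ i, Measurable (X i))
    (hindep : iIndepFun X P)
    (hident : ∀ i, P.map (X i) = P.map (X 0))
    (t : ℝ) (n : ℕ) :
    ∫⁻ ω, ENNReal.ofReal (Real.exp (-t * rwS X n ω)) ∂P
      = (∫⁻ ω, ENNReal.ofReal (Real.exp (-t * X 0 ω)) ∂P) ^ n := by
  set g : ℕ → Ω → ℝ≥0∞ := fun i ω => ENNReal.ofReal (Real.exp (-t * X i ω)) with hg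
  have hmf : Measurable (fun r : ℝ => ENNReal.ofReal (Real.exp (-t * r))) :=
    ENNReal.measurable_ofReal.comp (Real.measurable_exp.comp (measurable_const.mul measurable_id))
  have hgmeas : ∀ i, Measurable (g i) := fun i => hmf.comp (hmeas i)
  have hgind : iIndepFun g P := hindep.comp _ (fun _ => hmf)
  have hident' : ∀ i, ∫⁻ ω, g i ω ∂P = ∫⁻ ω, g 0 ω ∂P := by
    intro i
    calc ∫⁻ ω, g i ω ∂P = ∫⁻ r, ENNReal.ofReal (Real.exp (-t * r)) ∂(P.map (X i)) := by
          rw [lintegral_map hmf (hmeas i)]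
      _ = ∫⁻ r, ENNReal.ofReal (Real.exp (-t * r)) ∂(P.map (X 0)) := by rw [hident i]
      _ = ∫⁻ ω, g 0 ω ∂P := by rw [lintegral_map hmf (hmeas 0)]
  have hpt : ∀ ω, ENNReal.ofReal (Real.exp (-t * rwS X n ω)) = ∏ i ∈ Finset.range n, g i ω := by
    intro ω
    unfold rwS
    rw [Finset.mul_sum, Real.exp_sum]
    exact ENNReal.ofReal_prod_of_nonneg (fun i _ => (Real.exp_pos _).le)
  simp_rw [hpt]
  have key : ∀ m : ℕ, ∫⁻ ω, ∏ i ∈ Finset.range m, g i ω ∂P = (∫⁻ ω, g 0 ω ∂P) ^ m := by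
    intro m
    induction m with
    | zero => simp
    | succ m ih =>
      have hmm : Measurable (fun ω => ∏ i ∈ Finset.range m, g i ω) :=
        Finset.measurable_prod _ (fun i _ => hgmeas i)
      have hind2 : IndepFun (fun ω => ∏ i ∈ Finset.range m, g i ω) (g m) P := by
        have h := hgind.indepFun_prod_range_succ hgmeas m
        have he : (∏ j ∈ Finset.range m, g j) = (fun ω => ∏ i ∈ Finset.range m, g i ω) :=
          funext fun ω => by simp [Finset.prod_apply]
        rwa [he] at h
      calc ∫⁻ ω, ∏ i ∈ Finset.range (m+1), g i ω ∂P
          = ∫⁻ ω, (∏ i ∈ Finset.range m, g i ω) * g m ω ∂P := by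
            simp_rw [Finset.prod_range_succ]
        _ = (∫⁻ ω, ∏ i ∈ Finset.range m, g i ω ∂P) * ∫⁻ ω, g m ω ∂P :=
            lintegral_mul_eq_lintegral_mul_lintegral_of_indepFun hmm (hgmeas m) hind2
        _ = (∫⁻ ω, g 0 ω ∂P) ^ (m+1) := by rw [ih, hident' m, pow_succ]
  exact key n

-- Chernoff upper bound

lemma upper_bound {Ω : Type*} [MeasurableSpace Ω] (P : Measure Ω) [IsProbabilityMeasure P]
    (X : ℕ → Ω → ℝ) (hmeas : ∀ i, Measurable (X i))
    (hindep : iIndepFun X P)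
    (hident : ∀ i, P.map (X i) = P.map (X 0))
    (x t : ℝ) (ht : 0 ≤ t) (n : ℕ) :
    P {ω | (n : ℕ∞) < firstPassage X x ω} ≤ ENNReal.ofReal (Real.exp (t * x)) *
      (∫⁻ ω, ENNReal.ofReal (Real.exp (-t * X 0 ω)) ∂P) ^ n := by
  have hsub : {ω | (n : ℕ∞) < firstPassage X x ω} ⊆ {ω | rwS X n ω ≤ x} := by
    intro ω hω
    exact (lt_firstPassage_iff X x ω n).mp hω n le_rfl
  refine le_trans (measure_mono hsub) ?_
  have hpt : ∀ ω, ({ω | rwS X n ω ≤ x}).indicator (fun _ => (1:ℝ≥0∞)) ω ≤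
      ENNReal.ofReal (Real.exp (t * x)) * ENNReal.ofReal (Real.exp (-t * rwS X n ω)) := by
    intro ω
    rw [← ENNReal.ofReal_mul (Real.exp_pos _).le, ← Real.exp_add]
    rw [Set.indicator_apply]
    split_ifs with h
    · rw [← ENNReal.ofReal_one]
      apply ENNReal.ofReal_le_ofReal
      rw [← Real.exp_zero]
      apply Real.exp_le_exp.mpr
      have h' : rwS X n ω ≤ x := h
      nlinarith
    · exact zero_le
  calc P {ω | rwS X n ω ≤ x}
      = ∫⁻ ω, ({ω | rwS X n ω ≤ x}).indicator (fun _ => (1:ℝ≥0∞)) ω ∂P := by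
        rw [lintegral_indicator_const (measurableSet_le (rwS_measurable X hmeas n)
          measurable_const), one_mul]
    _ ≤ ∫⁻ ω, ENNReal.ofReal (Real.exp (t * x)) * ENNReal.ofReal (Real.exp (-t * rwS X n ω)) ∂P :=
        lintegral_mono hpt
    _ = ENNReal.ofReal (Real.exp (t * x)) * ∫⁻ ω, ENNReal.ofReal (Real.exp (-t * rwS X n ω)) ∂P :=
        lintegral_const_mul _ ((ENNReal.measurable_ofReal.comp
          (Real.measurable_exp.comp (measurable_const.mul (rwS_measurable X hmeas n)))))
    _ = _ := by rw [laplace_Sn P X hmeas hindep hident t n]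

lemma phi_tendsto {Ω : Type*} [MeasurableSpace Ω] (P : Measure Ω) [IsProbabilityMeasure P]
    (X : ℕ → Ω → ℝ) (hmeas : ∀ i, Measurable (X i))
    (hnonneg : P {ω | 0 ≤ X 0 ω} = 1) :
    Tendsto (fun t : ℕ => ∫⁻ ω, ENNReal.ofReal (Real.exp (-(t:ℝ) * X 0 ω)) ∂P) atTop
      (𝓝 (P {ω | X 0 ω = 0})) := by
  have hsm : MeasurableSet {ω | 0 ≤ X 0 ω} := measurableSet_le measurable_const (hmeas 0)
  have hae : ∀ᵐ ω ∂P, 0 ≤ X 0 ω := by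
    rw [ae_iff]
    have : {ω | ¬ 0 ≤ X 0 ω} = {ω | 0 ≤ X 0 ω}ᶜ := by ext ω; simp
    rw [this, prob_compl_eq_zero_iff hsm]
    exact hnonneg
  have hzm : MeasurableSet {ω | X 0 ω = 0} := (hmeas 0) (measurableSet_singleton 0)
  have hFint : ∫⁻ ω, ({ω | X 0 ω = 0}).indicator (fun _ => (1:ℝ≥0∞)) ω ∂P
      = P {ω | X 0 ω = 0} := by
    rw [lintegral_indicator_const hzm, one_mul]
  rw [← hFint]
  apply lintegral_tendsto_of_tendsto_of_antitone
  · intro n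
    exact ((ENNReal.measurable_ofReal.comp (Real.measurable_exp.comp
      (measurable_const.mul (hmeas 0))))).aemeasurable
  · filter_upwards [hae] with ω hω
    intro n m hnm
    apply ENNReal.ofReal_le_ofReal
    apply Real.exp_le_exp.mpr
    have : (n:ℝ) ≤ m := by exact_mod_cast hnm
    nlinarith
  · have : ∀ ω, ENNReal.ofReal (Real.exp (-(0:ℕ) * X 0 ω)) = 1 := by
      intro ω; norm_num
    simp_rw [this]
    simp
  · filter_upwards [hae] with ω hω
    rcases eq_or_lt_of_le hω with h0 | h0
    · have heq : ∀ n : ℕ, ENNReal.ofReal (Real.exp (-(n:ℝ) * X 0 ω)) = 1 := by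
        intro n; rw [← h0]; norm_num
      simp_rw [heq]
      have : ({ω | X 0 ω = 0}).indicator (fun _ => (1:ℝ≥0∞)) ω = 1 := by
        rw [Set.indicator_of_mem]; exact h0.symm
      rw [this]
      exact tendsto_const_nhds
    · have : ({ω | X 0 ω = 0}).indicator (fun _ => (1:ℝ≥0∞)) ω = 0 := by
        rw [Set.indicator_of_notMem]
        simp only [Set.mem_setOf_eq]
        exact ne_of_gt h0
      rw [this]
      have h1 : Tendsto (fun n : ℕ => -(n:ℝ) * X 0 ω) atTop atBot := by
        apply Tendsto.atBot_mul_const h0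
        exact tendsto_neg_atBot_iff.mpr tendsto_natCast_atTop_atTop
      have h2 : Tendsto (fun n : ℕ => Real.exp (-(n:ℝ) * X 0 ω)) atTop (𝓝 0) :=
        Real.tendsto_exp_atBot.comp h1
      have h3 := (ENNReal.continuous_ofReal.tendsto 0).comp h2
      simpa [Function.comp_def] using h3

lemma exp_pow (a : ℝ) (n : ℕ) :
    ENNReal.ofReal (Real.exp (a * n)) = ENNReal.ofReal (Real.exp a) ^ n := by
  rw [← ENNReal.ofReal_pow (Real.exp_pos a).le, ← Real.exp_nat_mul, mul_comm]

lemma condA {Ω : Type*} [MeasurableSpace Ω] (P : Measure Ω) [IsProbabilityMeasure P]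
    (X : ℕ → Ω → ℝ) (hmeas : ∀ i, Measurable (X i))
    (hindep : iIndepFun X P)
    (hident : ∀ i, P.map (X i) = P.map (X 0))
    (hnonneg : P {ω | 0 ≤ X 0 ω} = 1)
    (a : ℝ) (ha : 0 < a)
    (hcond : (P {ω | X 0 ω = 0}).toReal = 0 ∨ a < -Real.log (P {ω | X 0 ω = 0}).toReal) :
    ∀ x ≥ (0:ℝ), expMoment P a (firstPassage X x) < ⊤ := by
  intro x hx
  set β : ℝ≥0∞ := P {ω | X 0 ω = 0} with hβ
  have hβne : β ≠ ⊤ := (measure_lt_top P _).ne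
  -- β < ofReal (exp (-a))
  have hβlt : β < ENNReal.ofReal (Real.exp (-a)) := by
    by_cases h0 : β.toReal = 0
    · have : β = 0 := by
        rcases ENNReal.toReal_eq_zero_iff β |>.mp h0 with h | h
        · exact h
        · exact absurd h hβne
      rw [this]
      exact ENNReal.ofReal_pos.mpr (Real.exp_pos _) |>.trans_le le_rfl
    · have hlog : a < -Real.log β.toReal := hcond.resolve_left h0
      have hβpos : 0 < β.toReal := lt_of_le_of_ne ENNReal.toReal_nonneg (Ne.symm h0)
      have : β.toReal < Real.exp (-a) := by
        calc β.toReal = Real.exp (Real.log β.toReal) := (Real.exp_log hβpos).symm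
          _ < Real.exp (-a) := Real.exp_lt_exp.mpr (by linarith)
      calc β = ENNReal.ofReal β.toReal := (ENNReal.ofReal_toReal hβne).symm
        _ < ENNReal.ofReal (Real.exp (-a)) := ENNReal.ofReal_lt_ofReal_iff (Real.exp_pos _) |>.mpr this
  -- pick t with φ t < ofReal (exp (-a))
  obtain ⟨t, hφt⟩ : ∃ t : ℕ, (∫⁻ ω, ENNReal.ofReal (Real.exp (-(t:ℝ) * X 0 ω)) ∂P)
      < ENNReal.ofReal (Real.exp (-a)) := by
    have := (phi_tendsto P X hmeas hnonneg).eventually_lt_const hβlt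
    exact this.exists
  set φ : ℝ≥0∞ := ∫⁻ ω, ENNReal.ofReal (Real.exp (-(t:ℝ) * X 0 ω)) ∂P with hφ
  set r : ℝ≥0∞ := ENNReal.ofReal (Real.exp a) * φ with hr
  have hrlt : r < 1 := by
    calc r < ENNReal.ofReal (Real.exp a) * ENNReal.ofReal (Real.exp (-a)) := by
          apply ENNReal.mul_lt_mul_right (by simp [Real.exp_pos]) ENNReal.ofReal_ne_top hφt
        _ = 1 := by
          rw [← ENNReal.ofReal_mul (Real.exp_pos _).le, ← Real.exp_add]
          simp
  set C : ℝ≥0∞ := ENNReal.ofReal (Real.exp a) * ENNReal.ofReal (Real.exp (t * x)) with hC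
  have hterm : ∀ n : ℕ,
      ENNReal.ofReal (Real.exp (a * (n+1)) - Real.exp (a * n)) *
        P {ω | (n : ℕ∞) < firstPassage X x ω} ≤ C * r ^ n := by
    intro n
    have h1 : ENNReal.ofReal (Real.exp (a * (n+1)) - Real.exp (a * n)) ≤
        ENNReal.ofReal (Real.exp (a * (n+1))) :=
      ENNReal.ofReal_le_ofReal (by linarith [Real.exp_pos (a * (n:ℝ))])
    have h2 := upper_bound P X hmeas hindep hident x t (by positivity) n
    calc ENNReal.ofReal (Real.exp (a * (n+1)) - Real.exp (a * n)) *
          P {ω | (n : ℕ∞) < firstPassage X x ω}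
        ≤ ENNReal.ofReal (Real.exp (a * (n+1))) *
          (ENNReal.ofReal (Real.exp (t * x)) * φ ^ n) := by
          refine mul_le_mul' h1 ?_
          convert h2 using 3
      _ = C * r ^ n := by
          have e1 : ENNReal.ofReal (Real.exp (a * ((n:ℝ)+1))) =
              ENNReal.ofReal (Real.exp a) * ENNReal.ofReal (Real.exp a) ^ n := by
            rw [← exp_pow a n, ← ENNReal.ofReal_mul (Real.exp_pos _).le, ← Real.exp_add]
            ring_nf
          rw [e1, hr, mul_pow, hC]
          ring
  have hsum : ∑' n : ℕ, ENNReal.ofReal (Real.exp (a * (n+1)) - Real.exp (a * n)) *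
      P {ω | (n : ℕ∞) < firstPassage X x ω} ≤ C * (1 - r)⁻¹ := by
    calc _ ≤ ∑' n : ℕ, C * r ^ n := ENNReal.tsum_le_tsum hterm
      _ = C * (1 - r)⁻¹ := by rw [ENNReal.tsum_mul_left, ENNReal.tsum_geometric]
  rw [expMoment_eq P a ha _ (fun n => fp_set_measurable X hmeas x n)]
  have hCne : C ≠ ⊤ := by
    simp [hC, ENNReal.mul_ne_top, ENNReal.ofReal_ne_top]
  have hinv : (1 - r)⁻¹ ≠ ⊤ := by
    rw [ENNReal.inv_ne_top]
    exact (tsub_pos_iff_lt.mpr hrlt).ne'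
  calc 1 + ∑' n : ℕ, ENNReal.ofReal (Real.exp (a * (n+1)) - Real.exp (a * n)) *
        P {ω | (n : ℕ∞) < firstPassage X x ω}
      ≤ 1 + C * (1 - r)⁻¹ := add_le_add le_rfl hsum
    _ < ⊤ := by
        rw [ENNReal.add_lt_top]
        exact ⟨ENNReal.one_lt_top, ENNReal.mul_lt_top hCne.lt_top hinv.lt_top⟩

lemma condB {Ω : Type*} [MeasurableSpace Ω] (P : Measure Ω) [IsProbabilityMeasure P]
    (X : ℕ → Ω → ℝ) (hmeas : ∀ i, Measurable (X i))
    (hindep : iIndepFun X P)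
    (hident : ∀ i, P.map (X i) = P.map (X 0))
    (a : ℝ) (ha : 0 < a)
    (hcond : ¬ ((P {ω | X 0 ω = 0}).toReal = 0 ∨ a < -Real.log (P {ω | X 0 ω = 0}).toReal)) :
    ∀ x ≥ (0:ℝ), expMoment P a (firstPassage X x) = ⊤ := by
  intro x hx
  push_neg at hcond
  obtain ⟨h0, hlog⟩ := hcond
  set β : ℝ≥0∞ := P {ω | X 0 ω = 0} with hβ
  have hβne : β ≠ ⊤ := (measure_lt_top P _).ne
  have hβpos : 0 < β.toReal := lt_of_le_of_ne ENNReal.toReal_nonneg (Ne.symm h0)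
  have hexp : Real.exp (-a) ≤ β.toReal := by
    calc Real.exp (-a) ≤ Real.exp (Real.log β.toReal) := Real.exp_le_exp.mpr (by linarith)
      _ = β.toReal := Real.exp_log hβpos
  have hge1 : (1:ℝ≥0∞) ≤ ENNReal.ofReal (Real.exp a) * β := by
    calc (1:ℝ≥0∞) = ENNReal.ofReal (Real.exp a) * ENNReal.ofReal (Real.exp (-a)) := by
          rw [← ENNReal.ofReal_mul (Real.exp_pos _).le, ← Real.exp_add]; simp
      _ ≤ ENNReal.ofReal (Real.exp a) * β := by
          refine mul_le_mul' le_rfl ?_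
          calc ENNReal.ofReal (Real.exp (-a)) ≤ ENNReal.ofReal β.toReal :=
                ENNReal.ofReal_le_ofReal hexp
            _ = β := ENNReal.ofReal_toReal hβne
  have hterm : ∀ n : ℕ, ENNReal.ofReal (Real.exp a - 1) ≤
      ENNReal.ofReal (Real.exp (a * (n+1)) - Real.exp (a * n)) *
        P {ω | (n : ℕ∞) < firstPassage X x ω} := by
    intro n
    have hc : ENNReal.ofReal (Real.exp (a * (n+1)) - Real.exp (a * n)) =
        ENNReal.ofReal (Real.exp a) ^ n * ENNReal.ofReal (Real.exp a - 1) := by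
      have h1 : Real.exp (a * ((n:ℝ)+1)) - Real.exp (a * n) =
          Real.exp (a * n) * (Real.exp a - 1) := by
        rw [mul_sub, ← Real.exp_add]; ring_nf
      have hge : (1:ℝ) ≤ Real.exp a := Real.one_le_exp ha.le
      rw [h1, ENNReal.ofReal_mul (Real.exp_pos _).le, exp_pow a n]
    calc ENNReal.ofReal (Real.exp a - 1)
        = 1 ^ n * ENNReal.ofReal (Real.exp a - 1) := by rw [one_pow, one_mul]
      _ ≤ (ENNReal.ofReal (Real.exp a) * β) ^ n * ENNReal.ofReal (Real.exp a - 1) :=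
          mul_le_mul' (pow_le_pow_left' hge1 n) le_rfl
      _ = ENNReal.ofReal (Real.exp a) ^ n * ENNReal.ofReal (Real.exp a - 1) * β ^ n := by
          rw [mul_pow]; ring
      _ ≤ ENNReal.ofReal (Real.exp (a * (n+1)) - Real.exp (a * n)) *
          P {ω | (n : ℕ∞) < firstPassage X x ω} := by
          rw [hc]
          exact mul_le_mul' le_rfl (lower_bound P X hmeas hindep hident x hx n)
  rw [expMoment_eq P a ha _ (fun n => fp_set_measurable X hmeas x n)]
  have hsum : (⊤:ℝ≥0∞) ≤ ∑' n : ℕ, ENNReal.ofReal (Real.exp (a * (n+1)) - Real.exp (a * n)) *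
      P {ω | (n : ℕ∞) < firstPassage X x ω} := by
    calc (⊤:ℝ≥0∞) = ∑' _ : ℕ, ENNReal.ofReal (Real.exp a - 1) := by
          rw [ENNReal.tsum_const_eq_top_of_ne_zero]
          simp only [ne_eq, ENNReal.ofReal_eq_zero, not_le]
          have := Real.exp_lt_exp.mpr ha
          rw [Real.exp_zero] at this
          linarith
      _ ≤ _ := ENNReal.tsum_le_tsum hterm
  rw [top_le_iff.mp hsum]
  simp


/-- For a random walk with a.s. nonnegative i.i.d. increments with
`β := P{X = 0} < 1` and `a > 0`, `E e^{aτ(x)} < ∞` for some `x ≥ 0` iff for every `x ≥ 0`,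
iff `a < -log β` (with `-log 0 := ∞`). -/
theorem exp_moment_firstPassage_nonneg_increments
    {Ω : Type*} [MeasurableSpace Ω] (P : Measure Ω) [IsProbabilityMeasure P]
    (X : ℕ → Ω → ℝ) (hmeas : ∀ i, Measurable (X i))
    (hindep : iIndepFun X P)
    (hident : ∀ i, P.map (X i) = P.map (X 0))
    (hnonneg : P {ω | 0 ≤ X 0 ω} = 1)
    (hβlt : P {ω | X 0 ω = 0} < 1)
    (a : ℝ) (ha : 0 < a) :
    ((∃ x ≥ (0:ℝ), expMoment P a (firstPassage X x) < ⊤) ↔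
      ((P {ω | X 0 ω = 0}).toReal = 0 ∨ a < -Real.log (P {ω | X 0 ω = 0}).toReal)) ∧
    ((∀ x ≥ (0:ℝ), expMoment P a (firstPassage X x) < ⊤) ↔
      ((P {ω | X 0 ω = 0}).toReal = 0 ∨ a < -Real.log (P {ω | X 0 ω = 0}).toReal)) := by
  constructor
  · constructor
    · rintro ⟨x, hx, hfin⟩
      by_contra hcond
      exact hfin.ne (condB P X hmeas hindep hident a ha hcond x hx)
    · intro hcond
      exact ⟨0, le_rfl, condA P X hmeas hindep hident hnonneg a ha hcond 0 le_rfl⟩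
  · constructor
    · intro hall
      by_contra hcond
      exact (hall 0 le_rfl).ne (condB P X hmeas hindep hident a ha hcond 0 le_rfl)
    · intro hcond
      exact condA P X hmeas hindep hident hnonneg a ha hcond
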